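/- (Middle game B) If a ≥ 2, then nim(TER(M)) = 1 for M = [[0,a,1],[1,1,1],[1,a,0]]. -/
import Mathlib


/-- The minimum excludant of a set of naturals. -/
noncomputable def mex (S : Set ℕ) : ℕ := sInf {n : ℕ | n ∉ S}

/-- A gamegraph: positions with an option function whose option relation is
well-founded (all plays are acyclic), together with a starting position. -/
structure GameGraph where
  Pos : Type
  opt : Pos → Set Pos
  wf : WellFounded fun q p => q ∈ opt p
  start : Pos

/-- The nim-value of a position: the mex of the nim-values of its options;
terminal positions get nim-value `0`. -/
noncomputable def GameGraph.nim (G : GameGraph) : G.Pos → ℕ :=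
  G.wf.fix fun p ih => mex {n : ℕ | ∃ q, ∃ h : q ∈ G.opt p, ih q h = n}

/-- The nim-value of a gamegraph is the nim-value of its starting position. -/
noncomputable def GameGraph.nimValue (G : GameGraph) : ℕ := G.nim G.start

/-- 3×3 matrices of nonnegative integers. -/
abbrev Mat3 := Fin 3 → Fin 3 → ℕ

/-- All four edge sums (top row, bottom row, left column, right column) are positive. -/
def edgeOK (M : Mat3) : Prop :=
  0 < M 0 0 + M 0 1 + M 0 2 ∧ 0 < M 2 0 + M 2 1 + M 2 2 ∧
  0 < M 0 0 + M 1 0 + M 2 0 ∧ 0 < M 0 2 + M 1 2 + M 2 2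

/-- Decrease entry `(i, j)` by one. -/
def decEntry (M : Mat3) (i j : Fin 3) : Mat3 :=
  fun a b => if a = i ∧ b = j then M a b - 1 else M a b

/-- Matrices obtained from `M` by decreasing one positive entry by `1`. -/
def matMoves (M : Mat3) : Set Mat3 :=
  {N | ∃ i j, 0 < M i j ∧ N = decEntry M i j}

/-- Options in the avoidance matrix game `DNT(M)`: decrease a positive entry by one
so that all four edge sums remain positive. -/
def DNTmatOpt (M : Mat3) : Set Mat3 := {N | N ∈ matMoves M ∧ edgeOK N}

/-- Options in the achievement matrix game `TER(M)`: a matrix with a zero edge sum is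
terminal; otherwise any positive entry may be decreased by one. -/
def TERmatOpt (M : Mat3) : Set Mat3 := {N | edgeOK M ∧ N ∈ matMoves M}

def mtot (M : Mat3) : ℕ := ∑ p : Fin 3 × Fin 3, M p.1 p.2

theorem mtot_lt {M N : Mat3} (h : N ∈ matMoves M) : mtot N < mtot M := by
  obtain ⟨i, j, hpos, rfl⟩ := h
  unfold mtot
  apply Finset.sum_lt_sum
  · intro p _
    simp only [decEntry]
    split <;> omega
  · refine ⟨(i, j), Finset.mem_univ _, ?_⟩
    have hlt : M i j - 1 < M i j := by omega
    simpa [decEntry] using hlt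

theorem matWF {opt : Mat3 → Set Mat3} (h : ∀ M N, N ∈ opt M → N ∈ matMoves M) :
    WellFounded fun N M => N ∈ opt M :=
  Subrelation.wf (fun {N M} hNM => mtot_lt (h M N hNM)) (InvImage.wf mtot Nat.lt_wfRel.wf)

/-- The gamegraph of the matrix game `DNT(M)` with starting position `M`. -/
def DNTmat (M : Mat3) : GameGraph :=
  ⟨Mat3, DNTmatOpt, matWF (fun _ _ h => h.1), M⟩

/-- The gamegraph of the matrix game `TER(M)` with starting position `M`. -/
def TERmat (M : Mat3) : GameGraph :=
  ⟨Mat3, TERmatOpt, matWF (fun _ _ h => h.2), M⟩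

/-- The nim-value of the matrix game `DNT(M)`. -/
noncomputable def nimDNTmat (M : Mat3) : ℕ := (DNTmat M).nimValue

/-- The nim-value of the matrix game `TER(M)`. -/
noncomputable def nimTERmat (M : Mat3) : ℕ := (TERmat M).nimValue


namespace TERmgB

/-- Value table for the reduced game, indexed by
`((((((px*2+c)*2+d)*2+e)*2+f)*2+g)*3+py)`. -/
def tbl : List ℕ := [0,0,0,0,0,0,0,0,0,0,0,0,0,0,0,0,0,0,0,0,0,0,0,0,0,0,0,0,0,0,0,0,0,0,0,0,0,0,0,0,0,0,0,0,0,0,0,0,0,0,0,1,2,1,0,0,0,2,1,2,0,0,0,2,1,2,0,0,0,1,2,1,0,1,2,2,3,4,0,2,1,1,4,3,0,2,1,1,4,3,0,1,2,2,3,4,0,0,0,0,0,0,0,0,0,1,2,1,0,0,0,0,0,0,0,0,0,2,1,2,0,0,0,0,0,0,0,1,2,2,3,4,0,0,0,0,0,0,0,2,1,1,4,3,0,0,0,2,1,2,0,0,0,3,4,3,0,0,0,1,2,1,0,0,0,4,3,4,0,2,1,1,4,3,0,3,4,4,0,1,0,1,2,2,3,4,0,4,3,3,1,0,0,0,0,0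,0,0,0,0,0,2,1,2,0,0,0,0,0,0,0,0,0,1,2,1,0,0,0,0,0,0,0,2,1,1,4,3,0,0,0,0,0,0,0,1,2,2,3,4,0,0,0,1,2,1,0,0,0,4,3,4,0,0,0,2,1,2,0,0,0,3,4,3,0,1,2,2,3,4,0,4,3,3,1,0,0,2,1,1,4,3,0,3,4,4,0,1]

def T (px c d e f g py : ℕ) : ℕ := tbl.getD (((((((px*2+c)*2+d)*2+e)*2+f)*2+g)*3+py)) 0

def phi (x : ℕ) : ℕ := if x = 0 then 0 else 2 - x % 2

def V (x c d e f g y : ℕ) : ℕ := T (phi x) c d e f g (phi y)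

def P (x c d e f g y n : ℕ) : Prop :=
  (x ≠ 0 ∧ n = V (x-1) c d e f g y) ∨
  (c ≠ 0 ∧ n = V x (c-1) d e f g y) ∨
  (d ≠ 0 ∧ n = V x c (d-1) e f g y) ∨
  (e ≠ 0 ∧ n = V x c d (e-1) f g y) ∨
  (f ≠ 0 ∧ n = V x c d e (f-1) g y) ∨
  (g ≠ 0 ∧ n = V x c d e f (g-1) y) ∨
  (y ≠ 0 ∧ n = V x c d e f g (y-1))

lemma mex_eq_of {p : ℕ → Prop} {k : ℕ} (h1 : ∀ j < k, p j) (h2 : ¬ p k) :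
    mex {n | p n} = k := by
  unfold mex
  have hk : k ∈ {n : ℕ | n ∉ {n : ℕ | p n}} := h2
  refine le_antisymm (Nat.sInf_le hk) ?_
  by_contra h
  push_neg at h
  have hmem := Nat.sInf_mem (⟨k, hk⟩ : Set.Nonempty {n : ℕ | n ∉ {n : ℕ | p n}})
  exact hmem (h1 _ h)

lemma phi_cases (x : ℕ) :
    (phi x = 0 ∧ phi (x-1) = 0 ∧ x = 0) ∨ (phi x = 1 ∧ phi (x-1) = 0 ∧ x ≠ 0) ∨
    (phi x = 2 ∧ phi (x-1) = 1 ∧ x ≠ 0) ∨ (phi x = 1 ∧ phi (x-1) = 2 ∧ x ≠ 0) := by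
  unfold phi
  split_ifs <;> omega

lemma phi_le (x : ℕ) : phi x ≤ 2 := by unfold phi; split <;> omega

lemma phi_zero : phi 0 = 0 := rfl

set_option synthInstance.maxSize 100000 in
set_option synthInstance.maxHeartbeats 1000000 in
set_option maxHeartbeats 2000000 in
lemma T_term : ∀ px < 3, ∀ c < 2, ∀ d < 2, ∀ e < 2, ∀ f < 2, ∀ g < 2, ∀ py < 3,
    (px + c = 0 ∨ g + py = 0 ∨ d + g = 0 ∨ c + f = 0) → T px c d e f g py = 0 := by decide

lemma V_term (x c d e f g y : ℕ) (hc : c ≤ 1) (hd : d ≤ 1) (he : e ≤ 1) (hf : f ≤ 1)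
    (hg : g ≤ 1) (ht : x + c = 0 ∨ g + y = 0 ∨ d + g = 0 ∨ c + f = 0) :
    V x c d e f g y = 0 := by
  have hx := phi_le x
  have hy := phi_le y
  have hx0 : x = 0 → phi x = 0 := fun h => by rw [h]; rfl
  have hy0 : y = 0 → phi y = 0 := fun h => by rw [h]; rfl
  unfold V
  refine T_term _ (by omega) _ (by omega) _ (by omega) _ (by omega) _ (by omega) _ (by omega)
    _ (by omega) ?_
  rcases ht with h|h|h|h
  · have := hx0 (by omega); omega
  · have := hy0 (by omega); omega
  · omega
  · omega

set_option synthInstance.maxSize 100000 in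
set_option synthInstance.maxHeartbeats 1000000 in
set_option maxHeartbeats 4000000 in
lemma mex_key (x c d e f g y : ℕ) (hc : c ≤ 1) (hd : d ≤ 1) (he : e ≤ 1) (hf : f ≤ 1)
    (hg : g ≤ 1) (t1 : x + c ≠ 0) (t2 : g + y ≠ 0) (t3 : d + g ≠ 0) (t4 : c + f ≠ 0) :
    mex {n | P x c d e f g y n} = V x c d e f g y := by
  unfold P V
  rcases phi_cases x with ⟨h1,h2,h3⟩|⟨h1,h2,h3⟩|⟨h1,h2,h3⟩|⟨h1,h2,h3⟩ <;>
  rcases phi_cases y with ⟨k1,k2,k3⟩|⟨k1,k2,k3⟩|⟨k1,k2,k3⟩|⟨k1,k2,k3⟩ <;>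
  rw [h1, h2, k1, k2] <;>
  (first | subst h3 | simp only [ne_eq, h3, not_false_eq_true, true_and]) <;>
  (first | subst k3 | simp only [ne_eq, k3, not_false_eq_true, true_and]) <;>
  interval_cases c <;> interval_cases d <;> interval_cases e <;> interval_cases f <;>
  interval_cases g <;>
  first
    | (exfalso; omega)
    | exact mex_eq_of (by decide) (by decide)

end TERmgB


namespace TERmgB

lemma nim_eq_mex (G : GameGraph) (p : G.Pos) :
    G.nim p = mex {n | ∃ q, ∃ _ : q ∈ G.opt p, G.nim q = n} := by
  conv_lhs => rw [GameGraph.nim, WellFounded.fix_eq]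
  rfl

lemma nim_eq_mex' (M0 M : Mat3) :
    (TERmat M0).nim M = mex {n | ∃ q, ∃ _ : q ∈ TERmatOpt M, (TERmat M0).nim q = n} :=
  nim_eq_mex (TERmat M0) M

lemma edge_iff (x c d e f g y : ℕ) :
    edgeOK ![![0,x,c],![d,e,f],![g,y,0]] ↔ (x+c ≠ 0 ∧ g+y ≠ 0 ∧ d+g ≠ 0 ∧ c+f ≠ 0) := by
  show (0 < 0+x+c ∧ 0 < g+y+0 ∧ 0 < 0+d+g ∧ 0 < c+f+0) ↔ _
  omega

lemma dec01 (x c d e f g y : ℕ) :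
    decEntry ![![0,x,c],![d,e,f],![g,y,0]] 0 1 = ![![0,x-1,c],![d,e,f],![g,y,0]] := by
  funext a b; fin_cases a <;> fin_cases b <;> simp [decEntry]

lemma dec02 (x c d e f g y : ℕ) :
    decEntry ![![0,x,c],![d,e,f],![g,y,0]] 0 2 = ![![0,x,c-1],![d,e,f],![g,y,0]] := by
  funext a b; fin_cases a <;> fin_cases b <;> simp [decEntry]

lemma dec10 (x c d e f g y : ℕ) :
    decEntry ![![0,x,c],![d,e,f],![g,y,0]] 1 0 = ![![0,x,c],![d-1,e,f],![g,y,0]] := by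
  funext a b; fin_cases a <;> fin_cases b <;> simp [decEntry]

lemma dec11 (x c d e f g y : ℕ) :
    decEntry ![![0,x,c],![d,e,f],![g,y,0]] 1 1 = ![![0,x,c],![d,e-1,f],![g,y,0]] := by
  funext a b; fin_cases a <;> fin_cases b <;> simp [decEntry]

lemma dec12 (x c d e f g y : ℕ) :
    decEntry ![![0,x,c],![d,e,f],![g,y,0]] 1 2 = ![![0,x,c],![d,e,f-1],![g,y,0]] := by
  funext a b; fin_cases a <;> fin_cases b <;> simp [decEntry]

lemma dec20 (x c d e f g y : ℕ) :
    decEntry ![![0,x,c],![d,e,f],![g,y,0]] 2 0 = ![![0,x,c],![d,e,f],![g-1,y,0]] := by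
  funext a b; fin_cases a <;> fin_cases b <;> simp [decEntry]

lemma dec21 (x c d e f g y : ℕ) :
    decEntry ![![0,x,c],![d,e,f],![g,y,0]] 2 1 = ![![0,x,c],![d,e,f],![g,y-1,0]] := by
  funext a b; fin_cases a <;> fin_cases b <;> simp [decEntry]

lemma nim_V : ∀ (N : ℕ) (M0 : Mat3) (x c d e f g y : ℕ), x+c+d+e+f+g+y ≤ N →
    c ≤ 1 → d ≤ 1 → e ≤ 1 → f ≤ 1 → g ≤ 1 →
    (TERmat M0).nim ![![0,x,c],![d,e,f],![g,y,0]] = V x c d e f g y := by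
  intro N
  induction N with
  | zero =>
    intro M0 x c d e f g y hs hc hd he hf hg
    rw [nim_eq_mex', V_term x c d e f g y hc hd he hf hg (by omega)]
    refine mex_eq_of (fun j hj => absurd hj (Nat.not_lt_zero j)) ?_
    rintro ⟨q, ⟨hok, -⟩, -⟩
    exact absurd ((edge_iff x c d e f g y).mp hok) (by omega)
  | succ N ih =>
    intro M0 x c d e f g y hs hc hd he hf hg
    rw [nim_eq_mex']
    by_cases hE : x + c ≠ 0 ∧ g + y ≠ 0 ∧ d + g ≠ 0 ∧ c + f ≠ 0
    · have hedge : edgeOK ![![0,x,c],![d,e,f],![g,y,0]] := (edge_iff x c d e f g y).mpr hE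
      have hset : {n | ∃ q, ∃ _ : q ∈ TERmatOpt ![![0,x,c],![d,e,f],![g,y,0]],
          (TERmat M0).nim q = n} = {n | P x c d e f g y n} := by
        ext n
        simp only [Set.mem_setOf_eq]
        constructor
        · rintro ⟨q, ⟨-, i, j, hij, rfl⟩, rfl⟩
          fin_cases i <;> fin_cases j
          · exact absurd hij (lt_irrefl 0)
          have hp : 0 < x := hij
          · refine Or.inl ⟨by omega, ?_⟩
            exact (congrArg (TERmat M0).nim (dec01 x c d e f g y)).trans (ih M0 (x-1) c d e f g y (by omega) hc hd he hf hg)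
          have hp : 0 < c := hij
          · refine Or.inr (Or.inl ⟨by omega, ?_⟩)
            exact (congrArg (TERmat M0).nim (dec02 x c d e f g y)).trans (ih M0 x (c-1) d e f g y (by omega) (by omega) hd he hf hg)
          have hp : 0 < d := hij
          · refine Or.inr (Or.inr (Or.inl ⟨by omega, ?_⟩))
            exact (congrArg (TERmat M0).nim (dec10 x c d e f g y)).trans (ih M0 x c (d-1) e f g y (by omega) hc (by omega) he hf hg)
          have hp : 0 < e := hij
          · refine Or.inr (Or.inr (Or.inr (Or.inl ⟨by omega, ?_⟩)))
            exact (congrArg (TERmat M0).nim (dec11 x c d e f g y)).trans (ih M0 x c d (e-1) f g y (by omega) hc hd (by omega) hf hg)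
          · have hp : 0 < f := hij
            refine Or.inr (Or.inr (Or.inr (Or.inr (Or.inl
              ⟨by omega, ?_⟩))))
            exact (congrArg (TERmat M0).nim (dec12 x c d e f g y)).trans (ih M0 x c d e (f-1) g y (by omega) hc hd he (by omega) hg)
          · have hp : 0 < g := hij
            refine Or.inr (Or.inr (Or.inr (Or.inr (Or.inr (Or.inl
              ⟨by omega, ?_⟩)))))
            exact (congrArg (TERmat M0).nim (dec20 x c d e f g y)).trans (ih M0 x c d e f (g-1) y (by omega) hc hd he hf (by omega))
          · have hp : 0 < y := hij
            refine Or.inr (Or.inr (Or.inr (Or.inr (Or.inr (Or.inr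
              ⟨by omega, ?_⟩)))))
            exact (congrArg (TERmat M0).nim (dec21 x c d e f g y)).trans (ih M0 x c d e f g (y-1) (by omega) hc hd he hf hg)
          · exact absurd hij (lt_irrefl 0)
        · rintro (⟨h,rfl⟩|⟨h,rfl⟩|⟨h,rfl⟩|⟨h,rfl⟩|⟨h,rfl⟩|⟨h,rfl⟩|⟨h,rfl⟩)
          · exact ⟨_, ⟨hedge, 0, 1, show 0 < x by omega, rfl⟩,
              by rw [dec01]; exact ih M0 (x-1) c d e f g y (by omega) hc hd he hf hg⟩
          · exact ⟨_, ⟨hedge, 0, 2, show 0 < c by omega, rfl⟩,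
              by rw [dec02]; exact ih M0 x (c-1) d e f g y (by omega) (by omega) hd he hf hg⟩
          · exact ⟨_, ⟨hedge, 1, 0, show 0 < d by omega, rfl⟩,
              by rw [dec10]; exact ih M0 x c (d-1) e f g y (by omega) hc (by omega) he hf hg⟩
          · exact ⟨_, ⟨hedge, 1, 1, show 0 < e by omega, rfl⟩,
              by rw [dec11]; exact ih M0 x c d (e-1) f g y (by omega) hc hd (by omega) hf hg⟩
          · exact ⟨_, ⟨hedge, 1, 2, show 0 < f by omega, rfl⟩,
              by rw [dec12]; exact ih M0 x c d e (f-1) g y (by omega) hc hd he (by omega) hg⟩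
          · exact ⟨_, ⟨hedge, 2, 0, show 0 < g by omega, rfl⟩,
              by rw [dec20]; exact ih M0 x c d e f (g-1) y (by omega) hc hd he hf (by omega)⟩
          · exact ⟨_, ⟨hedge, 2, 1, show 0 < y by omega, rfl⟩,
              by rw [dec21]; exact ih M0 x c d e f g (y-1) (by omega) hc hd he hf hg⟩
      rw [hset]
      exact mex_key x c d e f g y hc hd he hf hg hE.1 hE.2.1 hE.2.2.1 hE.2.2.2
    · rw [V_term x c d e f g y hc hd he hf hg (by omega)]
      refine mex_eq_of (fun j hj => absurd hj (Nat.not_lt_zero j)) ?_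
      rintro ⟨q, ⟨hok, -⟩, -⟩
      exact absurd ((edge_iff x c d e f g y).mp hok) (by omega)

end TERmgB


/-- (Middle game B) If `a ≥ 2`, then `nim(TER([[0,a,1],[1,1,1],[1,a,0]])) = 1`. -/
theorem TER_middle_game_B (a : ℕ) (ha : 2 ≤ a) :
    nimTERmat ![![0, a, 1], ![1, 1, 1], ![1, a, 0]] = 1 := by
  have h : nimTERmat ![![0, a, 1], ![1, 1, 1], ![1, a, 0]] = TERmgB.V a 1 1 1 1 1 a :=
    TERmgB.nim_V (a+1+1+1+1+1+a) ![![0,a,1],![1,1,1],![1,a,0]] a 1 1 1 1 1 a (by omega)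
      (by omega) (by omega) (by omega) (by omega) (by omega)
  rw [h]
  unfold TERmgB.V
  have hp : TERmgB.phi a = 1 ∨ TERmgB.phi a = 2 := by unfold TERmgB.phi; split <;> omega
  rcases hp with hp | hp <;> rw [hp] <;> decide
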